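/- Let G be a triangulated Laman graph with N ≥ 2 vertices and let p ∈ P_G be strongly rigid. Then p is infinitesimally rigid: the kernel of the derivative dρ(p) of the distance map ρ at p has dimension exactly 3. -/

import Mathlib

open scoped BigOperators
open scoped Classical

noncomputable section

abbrev Plane : Type := EuclideanSpace ℝ (Fin 2)

abbrev Config (ι : Type) : Type := PiLp 2 (fun _ : ι => Plane)

def ConfigSpace {N : ℕ} (G : SimpleGraph (Fin N)) : Set (Config (Fin N)) :=
  {p | ∀ i j : Fin N, G.Adj i j → p i ≠ p j}

noncomputable def formationField {ι : Type} [Fintype ι] (Adj : ι → ι → Prop)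
    (f : ι → ι → ℝ → ℝ) (q : Config ι) : Config ι :=
  WithLp.toLp 2 (fun v => ∑ u, if Adj v u then f v u ‖q v - q u‖ • (q u - q v) else 0)

noncomputable def potential {N : ℕ} (G : SimpleGraph (Fin N)) (f : Fin N → Fin N → ℝ → ℝ)
    (p : Config (Fin N)) : ℝ :=
  ∑ i, ∑ j, if G.Adj i j ∧ i < j then ∫ t in (1:ℝ)..(‖p i - p j‖), t * f i j t else 0

def MemU (f : ℝ → ℝ) : Prop :=
  ContDiffOn ℝ 1 f (Set.Ioi 0) ∧
  (∀ x : ℝ, 0 < x → 0 < deriv (fun t => t * f t) x) ∧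
  (∃! d : ℝ, 0 < d ∧ f d = 0) ∧
  Filter.Tendsto (fun x : ℝ => ∫ t in x..(1:ℝ), t * f t) (nhdsWithin 0 (Set.Ioi 0)) Filter.atBot

def SO2 (θ : Matrix (Fin 2) (Fin 2) ℝ) : Prop :=
  θ ∈ Matrix.orthogonalGroup (Fin 2) ℝ ∧ θ.det = 1

noncomputable def rotAct {ι : Type} (θ : Matrix (Fin 2) (Fin 2) ℝ) (v : Plane) (p : Config ι) :
    Config ι :=
  WithLp.toLp 2 (fun i => Matrix.toEuclideanLin θ (p i) + v)

def orbitSE2 {ι : Type} (p : Config ι) : Set (Config ι) :=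
  {q | ∃ θ : Matrix (Fin 2) (Fin 2) ℝ, SO2 θ ∧ ∃ v : Plane, q = rotAct θ v p}

noncomputable def basisVec {ι : Type} [DecidableEq ι] (i : ι) (a : Fin 2) : Config ι :=
  WithLp.toLp 2 (Pi.single i (EuclideanSpace.single a (1:ℝ)) : ι → Plane)

noncomputable def hessMat {ι : Type} [Fintype ι] [DecidableEq ι] (Φ : Config ι → ℝ)
    (p : Config ι) : Matrix (ι × Fin 2) (ι × Fin 2) ℝ :=
  Matrix.of fun q r => fderiv ℝ (fun x => fderiv ℝ Φ x (basisVec q.1 q.2)) p (basisVec r.1 r.2)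

noncomputable def jacMat {ι : Type} [Fintype ι] [DecidableEq ι] (F : Config ι → Config ι)
    (p : Config ι) : Matrix (ι × Fin 2) (ι × Fin 2) ℝ :=
  Matrix.of fun q r => fderiv ℝ (fun x => F x q.1 q.2) p (basisVec r.1 r.2)

noncomputable def posIndex {n : Type} [Fintype n] [DecidableEq n] (A : Matrix n n ℝ) : ℕ :=
  Multiset.card (A.charpoly.roots.filter fun x => 0 < x)

noncomputable def negIndex {n : Type} [Fintype n] [DecidableEq n] (A : Matrix n n ℝ) : ℕ :=
  Multiset.card (A.charpoly.roots.filter fun x => x < 0)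

noncomputable def nullIndex {n : Type} [Fintype n] [DecidableEq n] (A : Matrix n n ℝ) : ℕ :=
  Multiset.card (A.charpoly.roots.filter fun x => x = 0)

inductive IsTriangulatedLaman : {N : ℕ} → SimpleGraph (Fin N) → Prop
  | base : IsTriangulatedLaman (⊤ : SimpleGraph (Fin 2))
  | grow {N : ℕ} (G' : SimpleGraph (Fin (N + 2))) (G : SimpleGraph (Fin (N + 3)))
      (j k : Fin (N + 2)) :
      IsTriangulatedLaman G' → G'.Adj j k →
      (∀ a b : Fin (N + 2), G.Adj a.castSucc b.castSucc ↔ G'.Adj a b) →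
      (∀ a : Fin (N + 2), G.Adj a.castSucc (Fin.last (N + 2)) ↔ a = j ∨ a = k) →
      IsTriangulatedLaman G

def StronglyRigid {N : ℕ} (G : SimpleGraph (Fin N)) (p : Config (Fin N)) : Prop :=
  ∀ i j k : Fin N, G.Adj i j → G.Adj i k → G.Adj j k →
    ¬ Collinear ℝ ({p i, p j, p k} : Set Plane)

def TriangleInequalities {N : ℕ} (G : SimpleGraph (Fin N)) (d : Fin N → Fin N → ℝ) : Prop :=
  ∀ i j k : Fin N, G.Adj i j → G.Adj i k → G.Adj j k → d j k < d i j + d i k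

def vertexSet {N : ℕ} (B : Finset (Sym2 (Fin N))) : Finset (Fin N) :=
  Finset.univ.filter fun v => ∃ e ∈ B, v ∈ e

def inducedSubgraph {N : ℕ} (B : Finset (Sym2 (Fin N))) : SimpleGraph ↥(vertexSet B) :=
  SimpleGraph.fromEdgeSet {e | Sym2.map Subtype.val e ∈ B}

def InducedTLaman {N : ℕ} (B : Finset (Sym2 (Fin N))) : Prop :=
  ∃ (M : ℕ) (H : SimpleGraph (Fin M)), IsTriangulatedLaman H ∧ Nonempty (inducedSubgraph B ≃g H)

def IsLineLamanPart {N : ℕ} (p : Config (Fin N)) (B : Finset (Sym2 (Fin N))) : Prop :=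
  InducedTLaman B ∧ Collinear ℝ (p '' (vertexSet B : Set (Fin N)))

def IsLineLamanPartition {N : ℕ} (G : SimpleGraph (Fin N)) (p : Config (Fin N))
    (P : Finset (Finset (Sym2 (Fin N)))) : Prop :=
  (∀ B ∈ P, B.Nonempty ∧ (B : Set (Sym2 (Fin N))) ⊆ G.edgeSet ∧ IsLineLamanPart p B) ∧
  ∀ e ∈ G.edgeSet, ∃! B, B ∈ P ∧ e ∈ B

def Refines {N : ℕ} (Q P : Finset (Finset (Sym2 (Fin N)))) : Prop :=
  ∀ B ∈ Q, ∃ C ∈ P, B ⊆ C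

def IsIndependentPartition {N : ℕ} (G : SimpleGraph (Fin N)) (p : Config (Fin N))
    (P : Finset (Finset (Sym2 (Fin N)))) : Prop :=
  IsLineLamanPartition G p P ∧ ∀ Q, IsLineLamanPartition G p Q → Refines Q P

def subConfig {N : ℕ} (p : Config (Fin N)) (B : Finset (Sym2 (Fin N))) :
    Config ↥(vertexSet B) :=
  WithLp.toLp 2 (fun v : ↥(vertexSet B) => p v.1)

noncomputable def subField {N : ℕ} (f : Fin N → Fin N → ℝ → ℝ) (B : Finset (Sym2 (Fin N))) :
    Config ↥(vertexSet B) → Config ↥(vertexSet B) :=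
  formationField (fun u v => s(u.1, v.1) ∈ B) (fun u v => f u.1 v.1)

def IsEquivariantMorse {N : ℕ} (G : SimpleGraph (Fin N)) (f : Fin N → Fin N → ℝ → ℝ) : Prop :=
  (∃ S : Finset (Config (Fin N)),
      {p | p ∈ ConfigSpace G ∧ formationField G.Adj f p = 0} = ⋃ q ∈ S, orbitSE2 q) ∧
  ∀ p, p ∈ ConfigSpace G → formationField G.Adj f p = 0 →
    nullIndex (jacMat (formationField G.Adj f) p) = 3

noncomputable def distMap {N : ℕ} (G : SimpleGraph (Fin N)) (p : Config (Fin N)) :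
    ↥G.edgeFinset → ℝ :=
  fun e => Sym2.lift ⟨fun i j => ‖p i - p j‖ ^ 2, fun i j => by dsimp only; rw [norm_sub_rev]⟩ e.1

open scoped RealInnerProductSpace

noncomputable def projCLM {ι : Type} [Fintype ι] (i : ι) : Config ι →L[ℝ] Plane :=
  (ContinuousLinearMap.proj i).comp
    (PiLp.continuousLinearEquiv 2 ℝ (fun _ : ι => Plane)).toContinuousLinearMap

@[simp] lemma projCLM_apply {ι : Type} [Fintype ι] (i : ι) (v : Config ι) :
    projCLM i v = v i := rfl

def Kker {N : ℕ} (G : SimpleGraph (Fin N)) (p : Config (Fin N)) :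
    Submodule ℝ (Config (Fin N)) where
  carrier := {v | ∀ i j, G.Adj i j → ⟪p i - p j, v i - v j⟫ = 0}
  add_mem' := by
    intro v w hv hw i j hij
    have h : (v + w) i - (v + w) j = (v i - v j) + (w i - w j) := by
      simp only [PiLp.add_apply]; abel
    rw [h, inner_add_right, hv i j hij, hw i j hij, add_zero]
  zero_mem' := by intro i j hij; simp
  smul_mem' := by
    intro c v hv i j hij
    have h : (c • v) i - (c • v) j = c • (v i - v j) := by
      simp only [PiLp.smul_apply, smul_sub]
    rw [h, real_inner_smul_right, hv i j hij, mul_zero]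

@[simp] lemma mem_Kker {N : ℕ} {G : SimpleGraph (Fin N)} {p v : Config (Fin N)} :
    v ∈ Kker G p ↔ ∀ i j, G.Adj i j → ⟪p i - p j, v i - v j⟫ = 0 := Iff.rfl

noncomputable def Dedge {N : ℕ} (p : Config (Fin N)) (i j : Fin N) :
    Config (Fin N) →L[ℝ] ℝ :=
  2 • (innerSL ℝ (p i - p j)).comp (projCLM i - projCLM j)

lemma Dedge_apply {N : ℕ} (p : Config (Fin N)) (i j : Fin N) (v : Config (Fin N)) :
    Dedge p i j v = 2 * ⟪p i - p j, v i - v j⟫ := by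
  simp [Dedge, two_smul, inner_sub_left, inner_sub_right]; ring

lemma Dedge_symm {N : ℕ} (p : Config (Fin N)) (i j : Fin N) :
    Dedge p i j = Dedge p j i := by
  ext v
  rw [Dedge_apply, Dedge_apply,
    show p j - p i = -(p i - p j) by rw [neg_sub],
    show v j - v i = -(v i - v j) by rw [neg_sub], inner_neg_neg]

noncomputable def Dfull {N : ℕ} (G : SimpleGraph (Fin N)) (p : Config (Fin N)) :
    Config (Fin N) →L[ℝ] (↥G.edgeFinset → ℝ) :=
  ContinuousLinearMap.pi fun e =>
    Sym2.lift ⟨fun i j => Dedge p i j, fun i j => Dedge_symm p i j⟩ e.1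

lemma hasFDerivAt_component {N : ℕ} (p : Config (Fin N)) (i j : Fin N) :
    HasFDerivAt (fun q : Config (Fin N) => ‖q i - q j‖ ^ 2) (Dedge p i j) p := by
  have h := ((projCLM i - projCLM j) : Config (Fin N) →L[ℝ] Plane).hasFDerivAt (x := p) |>.norm_sq
  have he : (fun q : Config (Fin N) => ‖q i - q j‖ ^ 2)
      = fun q => ‖(projCLM i - projCLM j) q‖ ^ 2 := by funext q; simp
  have hp : (projCLM i - projCLM j) p = p i - p j := by simp
  rw [he, Dedge]
  rw [hp] at h
  exact h

lemma hasFDerivAt_distMap {N : ℕ} (G : SimpleGraph (Fin N)) (p : Config (Fin N)) :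
    HasFDerivAt (distMap G) (Dfull G p) p := by
  apply hasFDerivAt_pi''
  rintro ⟨e, he⟩
  rw [Dfull, ContinuousLinearMap.proj_pi]
  revert he
  induction e using Sym2.ind with
  | _ i j =>
    intro he
    simp only [distMap, Sym2.lift_mk]
    exact hasFDerivAt_component p i j

lemma ker_Dfull {N : ℕ} (G : SimpleGraph (Fin N)) (p : Config (Fin N)) :
    LinearMap.ker (Dfull G p : Config (Fin N) →ₗ[ℝ] (↥G.edgeFinset → ℝ)) = Kker G p := by
  ext v
  simp only [LinearMap.mem_ker, mem_Kker]
  constructor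
  · intro h i j hij
    have he : s(i, j) ∈ G.edgeFinset := by
      rw [SimpleGraph.mem_edgeFinset, SimpleGraph.mem_edgeSet]; exact hij
    have := congrFun h ⟨s(i, j), he⟩
    simp only [Dfull, ContinuousLinearMap.coe_coe, ContinuousLinearMap.pi_apply, Sym2.lift_mk, Pi.zero_apply] at this
    rw [Dedge_apply] at this
    linarith
  · intro h
    funext e
    obtain ⟨e, he⟩ := e
    revert he
    induction e using Sym2.ind with
    | _ i j =>
      intro he
      have hij : G.Adj i j := by
        rw [SimpleGraph.mem_edgeFinset, SimpleGraph.mem_edgeSet] at he; exact he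
      simp only [Dfull, ContinuousLinearMap.coe_coe, ContinuousLinearMap.pi_apply, Sym2.lift_mk, Pi.zero_apply]
      rw [Dedge_apply, h i j hij, mul_zero]

lemma finrank_Config (ι : Type) [Fintype ι] :
    Module.finrank ℝ (Config ι) = 2 * Fintype.card ι := by
  rw [(WithLp.linearEquiv 2 ℝ (∀ _ : ι, Plane)).finrank_eq]
  simp [Module.finrank_pi_fintype, finrank_euclideanSpace, mul_comm]

lemma key_inner {a b c : Plane} (h : ¬ Collinear ℝ ({a, b, c} : Set Plane))
    (x : Plane) (h1 : ⟪b - a, x⟫ = 0) (h2 : ⟪c - a, x⟫ = 0) : x = 0 := by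
  by_contra hx
  apply h
  set W := (ℝ ∙ x)ᗮ with hW
  have hmem : ∀ y : Plane, ⟪y, x⟫ = 0 → y ∈ W := by
    intro y hy
    rw [hW, Submodule.mem_orthogonal]
    intro u hu
    rcases Submodule.mem_span_singleton.1 hu with ⟨r, rfl⟩
    rw [real_inner_smul_left, real_inner_comm, hy, mul_zero]
  have hfr : Module.finrank ℝ W = 1 := by
    rw [hW]
    have h3 := Submodule.finrank_add_finrank_orthogonal (𝕜 := ℝ) (E := Plane) (ℝ ∙ x)
    rw [finrank_span_singleton hx, finrank_euclideanSpace, Fintype.card_fin] at h3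
    omega
  obtain ⟨v, -, hv⟩ := finrank_eq_one_iff'.1 hfr
  have main : ∀ y : Plane, y - a ∈ W → ∃ r : ℝ, y = r • (v : Plane) +ᵥ a := by
    intro y hy
    obtain ⟨r, hr⟩ := hv ⟨y - a, hy⟩
    refine ⟨r, ?_⟩
    have h4 := congrArg Subtype.val hr
    simp only [Submodule.coe_smul] at h4
    rw [vadd_eq_add, h4]
    abel
  rw [collinear_iff_of_mem (Set.mem_insert a {b, c})]
  refine ⟨(v : Plane), fun q hq => ?_⟩
  rcases hq with h5 | h5 | h5
  · exact ⟨0, by rw [h5]; simp⟩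
  · exact main q (by rw [h5]; exact hmem _ h1)
  · exact main q (by rw [Set.mem_singleton_iff] at h5; rw [h5]; exact hmem _ h2)

lemma base_case (p : Config (Fin 2)) (hp : p 0 ≠ p 1) :
    Module.finrank ℝ (Kker (⊤ : SimpleGraph (Fin 2)) p) = 3 := by
  set u : Plane := p 0 - p 1 with hu
  have hu0 : u ≠ 0 := sub_ne_zero.2 hp
  set φ : Config (Fin 2) →ₗ[ℝ] ℝ :=
    (((innerSL ℝ u).comp (projCLM 0 - projCLM 1)) : Config (Fin 2) →L[ℝ] ℝ).toLinearMap with hφ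
  have hφa : ∀ v : Config (Fin 2), φ v = ⟪u, v 0 - v 1⟫ := fun v => rfl
  have hker : Kker (⊤ : SimpleGraph (Fin 2)) p = LinearMap.ker φ := by
    ext v
    rw [mem_Kker, LinearMap.mem_ker, hφa]
    constructor
    · intro hv
      exact hv 0 1 (by decide)
    · intro hv i j hij
      rw [SimpleGraph.top_adj] at hij
      have hc : ∀ a b : Fin 2, a ≠ b → (a = 0 ∧ b = 1) ∨ (a = 1 ∧ b = 0) := by decide
      rcases hc i j hij with ⟨rfl, rfl⟩ | ⟨rfl, rfl⟩
      · exact hv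
      · rw [show p 1 - p 0 = -(p 0 - p 1) by rw [neg_sub],
          show v 1 - v 0 = -(v 0 - v 1) by rw [neg_sub], inner_neg_neg]
        exact hv
  have hsurj : LinearMap.range φ = ⊤ := by
    rw [LinearMap.range_eq_top]
    intro r
    set w : Config (Fin 2) := WithLp.toLp 2 (fun t : Fin 2 => if t = 0 then u else 0) with hw
    have hφw : φ w = ⟪u, u⟫ := by rw [hφa]; simp [hw]
    have hinner : (⟪u, u⟫ : ℝ) ≠ 0 := inner_self_ne_zero.2 hu0
    refine ⟨(r / ⟪u, u⟫) • w, ?_⟩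
    rw [map_smul, smul_eq_mul, hφw, div_mul_cancel₀ _ hinner]
  have hrn := LinearMap.finrank_range_add_finrank_ker φ
  rw [hsurj, finrank_top, finrank_Config, ← hker] at hrn
  rw [Module.finrank_self, Fintype.card_fin] at hrn
  omega

lemma grow_finrank {N : ℕ} (G' : SimpleGraph (Fin (N + 2))) (G : SimpleGraph (Fin (N + 3)))
    (j k : Fin (N + 2)) (hjk : G'.Adj j k)
    (hcast : ∀ a b : Fin (N + 2), G.Adj a.castSucc b.castSucc ↔ G'.Adj a b)
    (hlast : ∀ a : Fin (N + 2), G.Adj a.castSucc (Fin.last (N + 2)) ↔ a = j ∨ a = k)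
    (p : Config (Fin (N + 3))) (hsr : StronglyRigid G p) :
    Module.finrank ℝ (Kker G p) =
      Module.finrank ℝ (Kker G' (WithLp.toLp 2 (fun a : Fin (N + 2) => p a.castSucc))) := by
  set L : Fin (N + 3) := Fin.last (N + 2) with hL
  set p' : Config (Fin (N + 2)) := WithLp.toLp 2 (fun a : Fin (N + 2) => p a.castSucc) with hp'def
  have hA1 : G.Adj j.castSucc L := (hlast j).2 (Or.inl rfl)
  have hA2 : G.Adj k.castSucc L := (hlast k).2 (Or.inr rfl)
  have hA3 : G.Adj j.castSucc k.castSucc := (hcast j k).2 hjk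
  have hnc : ¬ Collinear ℝ ({p L, p j.castSucc, p k.castSucc} : Set Plane) :=
    hsr L j.castSucc k.castSucc hA1.symm hA2.symm hA3
  set u1 : Plane := p j.castSucc - p L with hu1
  set u2 : Plane := p k.castSucc - p L with hu2
  have hK : ∀ x : Plane, ⟪u1, x⟫ = 0 → ⟪u2, x⟫ = 0 → x = 0 := fun x h1 h2 =>
    key_inner hnc x h1 h2
  set T : Plane →ₗ[ℝ] ℝ × ℝ :=
    LinearMap.prod ((innerSL ℝ u1 : Plane →L[ℝ] ℝ) : Plane →ₗ[ℝ] ℝ)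
      ((innerSL ℝ u2 : Plane →L[ℝ] ℝ) : Plane →ₗ[ℝ] ℝ) with hT
  have hTa : ∀ x : Plane, T x = (⟪u1, x⟫, ⟪u2, x⟫) := fun x => rfl
  have hTinj : Function.Injective T := by
    rw [← LinearMap.ker_eq_bot, LinearMap.ker_eq_bot']
    intro x hx
    exact hK x (congrArg Prod.fst hx) (congrArg Prod.snd hx)
  have hdim : Module.finrank ℝ Plane = Module.finrank ℝ (ℝ × ℝ) := by
    rw [finrank_euclideanSpace, Fintype.card_fin]
    simp
  have hTsurj : Function.Surjective T :=
    (LinearMap.injective_iff_surjective_of_finrank_eq_finrank hdim).1 hTinj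
  choose sol hsol using hTsurj
  set ext : Config (Fin (N + 2)) → Config (Fin (N + 3)) :=
    fun w => WithLp.toLp 2 (fun i => Fin.lastCases (sol (⟪u1, w j⟫, ⟪u2, w k⟫)) (fun a => w a) i) with hext
  have hext_cast : ∀ (w : Config (Fin (N + 2))) (a : Fin (N + 2)),
      ext w a.castSucc = w a := by
    intro w a; rw [hext]; dsimp only; exact Fin.lastCases_castSucc ..
  have hext_last : ∀ w : Config (Fin (N + 2)),
      ext w L = sol (⟪u1, w j⟫, ⟪u2, w k⟫) := by
    intro w; rw [hext, hL]; dsimp only; exact Fin.lastCases_last ..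
  have hs1 : ∀ w : Config (Fin (N + 2)), ⟪u1, ext w L⟫ = ⟪u1, w j⟫ := by
    intro w
    have h := congrArg Prod.fst (hsol (⟪u1, w j⟫, ⟪u2, w k⟫))
    rw [hext_last]
    exact h
  have hs2 : ∀ w : Config (Fin (N + 2)), ⟪u2, ext w L⟫ = ⟪u2, w k⟫ := by
    intro w
    have h := congrArg Prod.snd (hsol (⟪u1, w j⟫, ⟪u2, w k⟫))
    rw [hext_last]
    exact h
  have hext_mem : ∀ w : Config (Fin (N + 2)), w ∈ Kker G' p' → ext w ∈ Kker G p := by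
    intro w hw
    rw [mem_Kker]
    intro i i'
    induction i using Fin.lastCases with
    | last =>
      induction i' using Fin.lastCases with
      | last => intro hii; exact absurd hii (G.loopless.irrefl _)
      | cast b =>
        intro hii
        have hb : b = j ∨ b = k := (hlast b).1 hii.symm
        rw [hext_last]
        rcases hb with rfl | rfl
        · rw [hext_cast, show p L - p b.castSucc = -u1 by rw [hu1, neg_sub],
            inner_neg_left, inner_sub_right, ← hext_last, hs1, sub_self, neg_zero]
        · rw [hext_cast, show p L - p b.castSucc = -u2 by rw [hu2, neg_sub],
            inner_neg_left, inner_sub_right, ← hext_last, hs2, sub_self, neg_zero]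
    | cast a =>
      induction i' using Fin.lastCases with
      | last =>
        intro hii
        have ha : a = j ∨ a = k := (hlast a).1 hii
        rw [hext_last, hext_cast]
        rcases ha with rfl | rfl
        · rw [show p a.castSucc - p L = u1 from hu1.symm,
            inner_sub_right, ← hext_last, hs1, sub_self]
        · rw [show p a.castSucc - p L = u2 from hu2.symm,
            inner_sub_right, ← hext_last, hs2, sub_self]
      | cast b =>
        intro hii
        rw [hext_cast, hext_cast]
        exact hw a b ((hcast a b).1 hii)
  let F : Kker G p →ₗ[ℝ] Kker G' p' :=
    { toFun := fun v => ⟨WithLp.toLp 2 (fun a => (v : Config (Fin (N + 3))) a.castSucc), by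
        rw [mem_Kker]; intro a b hab; exact v.2 _ _ ((hcast a b).2 hab)⟩
      map_add' := fun v w => rfl
      map_smul' := fun c v => rfl }
  have hFinj : Function.Injective F := by
    rw [← LinearMap.ker_eq_bot, LinearMap.ker_eq_bot']
    intro v hv
    have hv' : ∀ a : Fin (N + 2), (v : Config (Fin (N + 3))) a.castSucc = 0 := by
      intro a
      exact congrArg (fun x : Kker G' p' => (x : Config (Fin (N + 2))) a) hv
    have hlast0 : (v : Config (Fin (N + 3))) L = 0 := by
      apply hK
      · have h1 := v.2 j.castSucc L hA1
        rw [hv' j] at h1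
        rw [← hu1] at h1
        rw [zero_sub, inner_neg_right] at h1
        linarith
      · have h1 := v.2 k.castSucc L hA2
        rw [hv' k] at h1
        rw [← hu2] at h1
        rw [zero_sub, inner_neg_right] at h1
        linarith
    apply Subtype.ext
    apply PiLp.ext
    intro i
    induction i using Fin.lastCases with
    | last => exact hlast0
    | cast a => exact hv' a
  have hFsurj : Function.Surjective F := by
    rintro ⟨w, hw⟩
    refine ⟨⟨ext w, hext_mem w hw⟩, ?_⟩
    apply Subtype.ext
    apply PiLp.ext
    intro a
    exact hext_cast w a
  exact (LinearEquiv.ofBijective F ⟨hFinj, hFsurj⟩).finrank_eq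

lemma finrank_Kker {N : ℕ} (G : SimpleGraph (Fin N)) (hG : IsTriangulatedLaman G) :
    ∀ p, p ∈ ConfigSpace G → StronglyRigid G p → Module.finrank ℝ (Kker G p) = 3 := by
  induction hG with
  | base =>
    intro p hp _
    exact base_case p (hp 0 1 (by decide))
  | grow G' G j k hG' hjk hcast hlast ih =>
    intro p hp hsr
    rw [grow_finrank G' G j k hjk hcast hlast p hsr]
    apply ih
    · intro a b hab
      exact hp _ _ ((hcast a b).2 hab)
    · intro a b c hab hac hbc
      exact hsr _ _ _ ((hcast a b).2 hab) ((hcast a c).2 hac) ((hcast b c).2 hbc)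


open Filter MeasureTheory

theorem stmt_7 {N : ℕ} (hN : 2 ≤ N) (G : SimpleGraph (Fin N)) (hG : IsTriangulatedLaman G)
    (p : Config (Fin N)) (hp : p ∈ ConfigSpace G) (hsr : StronglyRigid G p) :
    Module.finrank ℝ ↥(LinearMap.ker (fderiv ℝ (distMap G) p : Config (Fin N) →ₗ[ℝ] (↥G.edgeFinset → ℝ))) = 3 := by
  haveI : ContinuousSMul ℝ (Config (Fin N)) := IsBoundedSMul.continuousSMul
  have h1 : fderiv ℝ (distMap G) p = Dfull G p := (hasFDerivAt_distMap G p).fderiv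
  rw [h1, ker_Dfull G p]
  exact finrank_Kker G hG p hp hsr

end
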